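/- For every binary operation F : S¹ × S¹ → S¹ and all elements z, o ∈ S¹ satisfying F(z,x) = z and F(o,x) = x for all x ∈ S¹, the jump χ(F) is at least 2/3 (the domain S¹ × S¹ carrying the product topology). Hence μ(S¹, {F(0,x)≈0, F(1,x)≈x}) ≥ 2/3, and combined with the upper-bound construction, μ(S¹, {F(0,x)≈0, F(1,x)≈x}) = 2/3. -/

import Mathlib

open scoped ENNReal

/-- The jump of `f` at `b`: the infimum, over open neighborhoods `U` of `b`,
of the diameter (in `[0,∞]`) of `f '' U`. -/
noncomputable def jumpAt {B A : Type*} [TopologicalSpace B] [PseudoEMetricSpace A]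
    (f : B → A) (b : B) : ℝ≥0∞ :=
  ⨅ (U : Set B) (_ : IsOpen U) (_ : b ∈ U), EMetric.diam (f '' U)

/-- The jump of `f`: the supremum over all points of the jump of `f` there. -/
noncomputable def jump {B A : Type*} [TopologicalSpace B] [PseudoEMetricSpace A]
    (f : B → A) : ℝ≥0∞ :=
  ⨆ b, jumpAt f b

namespace CircleJumpAux

local notation "S" => AddCircle (2:ℝ)

private lemma two_pos' : (0:ℝ) < 2 := by norm_num

/-- Signed short distance: the representative in `[-1,1)` of `b - a`. -/
noncomputable def sg (a b : S) : ℝ :=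
  (QuotientAddGroup.equivIcoMod two_pos' (-1) (b - a) : ℝ)

lemma sg_mem (a b : S) : sg a b ∈ Set.Ico (-1 : ℝ) 1 := by
  have h := (QuotientAddGroup.equivIcoMod two_pos' (-1) (b - a)).2
  norm_num at h
  exact ⟨h.1, h.2⟩

lemma coe_sg (a b : S) : ((sg a b : ℝ) : S) = b - a := by
  exact (QuotientAddGroup.equivIcoMod two_pos' (-1:ℝ)).symm_apply_apply (b - a)

lemma sg_unique {a b : S} {r : ℝ} (hr : r ∈ Set.Ico (-1:ℝ) 1) (h : ((r:ℝ) : S) = b - a) :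
    sg a b = r := by
  have hr' : r ∈ Set.Ico (-1:ℝ) (-1 + 2) := by norm_num; exact ⟨hr.1, hr.2⟩
  rw [sg, ← h, QuotientAddGroup.equivIcoMod_coe]
  exact (toIcoMod_eq_self two_pos').mpr hr'

lemma abs_sg (a b : S) : |sg a b| = dist a b := by
  have h1 : |sg a b| ≤ |(2:ℝ)| / 2 := by
    have := sg_mem a b
    rw [abs_two]
    rw [abs_le]
    constructor <;> [linarith [this.1]; linarith [this.2]]
  have := (AddCircle.norm_coe_eq_abs_iff (2:ℝ) (by norm_num) (x := sg a b)).mpr h1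
  rw [coe_sg] at this
  rw [dist_eq_norm, ← norm_neg, neg_sub, this]

lemma sg_self (a : S) : sg a a = 0 :=
  sg_unique (by norm_num) (by simp)

lemma tri {a b c : S} (hab : dist a b < 2/3) (hbc : dist b c < 2/3) (hca : dist c a < 2/3) :
    sg a b + sg b c + sg c a = 0 := by
  have hT : (((sg a b + sg b c + sg c a : ℝ)) : S) = 0 := by
    rw [AddCircle.coe_add, AddCircle.coe_add, coe_sg, coe_sg, coe_sg]
    abel
  obtain ⟨k, hk⟩ := (AddCircle.coe_eq_zero_iff _).mp hT
  have habs : |sg a b + sg b c + sg c a| < 2 := by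
    calc |sg a b + sg b c + sg c a| ≤ |sg a b| + |sg b c| + |sg c a| := by
          exact (abs_add_le _ _).trans (by gcongr; exact abs_add_le _ _)
      _ < 2 := by rw [abs_sg, abs_sg, abs_sg]; linarith
  have hk0 : k = 0 := by
    by_contra hk0
    have : (1:ℝ) ≤ |(k:ℝ)| := by
      exact_mod_cast Int.one_le_abs (by exact_mod_cast hk0)
    rw [← hk] at habs
    rw [zsmul_eq_mul] at habs
    rw [abs_mul, abs_two] at habs
    nlinarith [abs_nonneg ((k:ℝ))]
  rw [← hk, hk0]
  simp

lemma quad {a b c d : S} (hab : dist a b < 2/3) (hbd : dist b d < 2/3)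
    (hac : dist a c < 2/3) (hcd : dist c d < 2/3) (had : dist a d < 2/3) :
    sg a b + sg b d = sg a c + sg c d := by
  have h1 := tri hab hbd (by rw [dist_comm]; exact had)
  have h2 := tri hac hcd (by rw [dist_comm]; exact had)
  linarith

end CircleJumpAux

open CircleJumpAux in
/-- Every binary operation on the circle of circumference 2 having a left zero and a
left one has jump at least `2/3`. -/
theorem jump_ge_of_zero_one_op_on_circle
    (F : AddCircle (2:ℝ) × AddCircle (2:ℝ) → AddCircle (2:ℝ))
    (z o : AddCircle (2:ℝ))
    (hz : ∀ x, F (z, x) = z) (ho : ∀ x, F (o, x) = x) :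
    2/3 ≤ jump F := by
  by_contra hcon
  push_neg at hcon
  haveI : Fact ((0:ℝ) < 2) := ⟨by norm_num⟩
  -- At every point there is an open neighborhood with small image diameter.
  have hpt : ∀ b, ∃ U : Set (AddCircle (2:ℝ) × AddCircle (2:ℝ)),
      IsOpen U ∧ b ∈ U ∧ EMetric.diam (F '' U) < 2/3 := by
    intro b
    have h1 : jumpAt F b < 2/3 := lt_of_le_of_lt (le_iSup _ b) hcon
    rw [jumpAt, iInf_lt_iff] at h1
    obtain ⟨U, hU⟩ := h1
    rw [iInf_lt_iff] at hU
    obtain ⟨hUo, hU⟩ := hU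
    rw [iInf_lt_iff] at hU
    obtain ⟨hUm, hU⟩ := hU
    exact ⟨U, hUo, hUm, hU⟩
  choose U hUo hUm hUd using hpt
  obtain ⟨δ, hδ, hball⟩ := lebesgue_number_lemma_of_metric (isCompact_univ
    (X := AddCircle (2:ℝ) × AddCircle (2:ℝ))) hUo
    (fun p _ => Set.mem_iUnion.2 ⟨p, hUm p⟩)
  -- Key uniform estimate
  have key : ∀ p q : AddCircle (2:ℝ) × AddCircle (2:ℝ),
      dist p q < δ → dist (F p) (F q) < 2/3 := by
    intro p q hpq
    obtain ⟨i, hi⟩ := hball p (Set.mem_univ p)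
    have hp : F p ∈ F '' U i := ⟨p, hi (Metric.mem_ball_self hδ), rfl⟩
    have hq : F q ∈ F '' U i := ⟨q, hi (by simpa [Metric.mem_ball, dist_comm] using hpq), rfl⟩
    have h2 : edist (F p) (F q) < (2/3 : ℝ≥0∞) :=
      lt_of_le_of_lt (EMetric.edist_le_diam_of_mem hp hq) (hUd i)
    have h23 : (2/3 : ℝ≥0∞) = ENNReal.ofReal (2/3) := by
      rw [ENNReal.ofReal_div_of_pos (by norm_num)]
      norm_num
    rw [h23] at h2
    rw [← edist_lt_ofReal]
    exact h2
  -- lifts of z and o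
  obtain ⟨ζ, hζ⟩ := QuotientAddGroup.mk_surjective z
  obtain ⟨ω, hω⟩ := QuotientAddGroup.mk_surjective o
  -- choose grid sizes
  obtain ⟨n, hn⟩ := exists_nat_gt (max 3 (2/δ))
  have hn3 : (3:ℝ) < n := lt_of_le_of_lt (le_max_left _ _) hn
  have hnpos : (0:ℝ) < n := by linarith
  have hstepx : (2:ℝ)/n < δ := by
    rw [div_lt_iff₀ hnpos]
    have := lt_of_le_of_lt (le_max_right _ _) hn
    rw [div_lt_iff₀ hδ] at this
    linarith
  obtain ⟨m, hm⟩ := exists_nat_gt (max 1 (|ω - ζ|/δ))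
  have hm1 : (1:ℝ) < m := lt_of_le_of_lt (le_max_left _ _) hm
  have hmpos : (0:ℝ) < m := by linarith
  have hnne : (n:ℝ) ≠ 0 := ne_of_gt hnpos
  have hmne : (m:ℝ) ≠ 0 := ne_of_gt hmpos
  have hstept : |ω - ζ| / m < δ := by
    rw [div_lt_iff₀ hmpos]
    have := lt_of_le_of_lt (le_max_right _ _) hm
    rw [div_lt_iff₀ hδ] at this
    linarith
  set q : ℝ := (ω - ζ) / m with hq
  set x : ℕ → AddCircle (2:ℝ) := fun i => ((2*i/n : ℝ) : AddCircle (2:ℝ)) with hxdef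
  set t : ℕ → AddCircle (2:ℝ) := fun k => ((ζ + k*q : ℝ) : AddCircle (2:ℝ)) with htdef
  set A : ℕ → ℕ → AddCircle (2:ℝ) := fun k i => F (t k, x i) with hAdef
  -- steps in the x direction
  have hxsub : ∀ i : ℕ, x (i+1) - x i = ((2/n : ℝ) : AddCircle (2:ℝ)) := by
    intro i
    show ((2*((i:ℕ)+1:ℕ)/n : ℝ) : AddCircle (2:ℝ)) - ((2*i/n : ℝ) : AddCircle (2:ℝ)) = _
    rw [← AddCircle.coe_sub]
    congr 1
    push_cast
    field_simp
    ring
  have hsgx : ∀ i : ℕ, sg (x i) (x (i+1)) = 2/n := by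
    intro i
    refine sg_unique ⟨le_trans (by norm_num : (-1:ℝ) ≤ 0) (by positivity), ?_⟩ (by rw [hxsub i])
    rw [div_lt_one hnpos]
    linarith
  have hdistx : ∀ i : ℕ, dist (x i) (x (i+1)) < δ := by
    intro i
    rw [← abs_sg, hsgx i, abs_of_pos (by positivity)]
    exact hstepx
  -- steps in the t direction
  have hdistt : ∀ k : ℕ, dist (t k) (t (k+1)) < δ := by
    intro k
    have hsub : t (k+1) - t k = ((q : ℝ) : AddCircle (2:ℝ)) := by
      show ((ζ + ((k:ℕ)+1:ℕ)*q : ℝ) : AddCircle (2:ℝ)) - ((ζ + k*q : ℝ) : AddCircle (2:ℝ)) = _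
      rw [← AddCircle.coe_sub]
      congr 1
      push_cast
      ring
    have hd : dist (t k) (t (k+1)) = ‖t (k+1) - t k‖ := by
      rw [dist_eq_norm, ← norm_neg, neg_sub]
    rw [hd, hsub]
    refine lt_of_le_of_lt (QuotientAddGroup.norm_mk_le_norm (m := q)) ?_
    rw [Real.norm_eq_abs, hq, abs_div, abs_of_pos hmpos]
    exact hstept
  -- distances between grid values
  have hAd : ∀ k k' i i' : ℕ, dist (t k) (t k') < δ → dist (x i) (x i') < δ →
      dist (A k i) (A k' i') < 2/3 := by
    intro k k' i i' h1 h2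
    exact key _ _ (by rw [Prod.dist_eq]; exact max_lt h1 h2)
  have hself : ∀ k : ℕ, dist (t k) (t k) < δ := fun k => by rw [dist_self]; exact hδ
  have hselfx : ∀ i : ℕ, dist (x i) (x i) < δ := fun i => by rw [dist_self]; exact hδ
  -- the quadrilateral identity in each grid cell
  have cell : ∀ k i : ℕ, sg (A k i) (A k (i+1)) =
      (sg (A k i) (A (k+1) i) - sg (A k (i+1)) (A (k+1) (i+1)))
        + sg (A (k+1) i) (A (k+1) (i+1)) := by
    intro k i
    have hq' := quad (a := A k i) (b := A k (i+1)) (c := A (k+1) i) (d := A (k+1) (i+1))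
      (hAd k k i (i+1) (hself k) (hdistx i))
      (hAd k (k+1) (i+1) (i+1) (hdistt k) (hselfx (i+1)))
      (hAd k (k+1) i i (hdistt k) (hselfx i))
      (hAd (k+1) (k+1) i (i+1) (hself (k+1)) (hdistx i))
      (hAd k (k+1) i (i+1) (hdistt k) (hdistx i))
    linarith
  have hxn : x n = x 0 := by
    show ((2*(n:ℕ)/n : ℝ) : AddCircle (2:ℝ)) = ((2*((0:ℕ):ℝ)/n : ℝ) : AddCircle (2:ℝ))
    rw [mul_div_assoc, div_self hnne, mul_one]
    norm_num
  set W : ℕ → ℝ := fun k => ∑ i ∈ Finset.range n, sg (A k i) (A k (i+1)) with hWdef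
  have hstepW : ∀ k : ℕ, W (k+1) = W k := by
    intro k
    set g : ℕ → ℝ := fun i => sg (A k i) (A (k+1) i) with hgdef
    have hgn : g n = g 0 := by
      show sg (A k n) (A (k+1) n) = sg (A k 0) (A (k+1) 0)
      have h1 : A k n = A k 0 := by show F (t k, x n) = F (t k, x 0); rw [hxn]
      have h2 : A (k+1) n = A (k+1) 0 := by
        show F (t (k+1), x n) = F (t (k+1), x 0); rw [hxn]
      rw [h1, h2]
    have hcongr : ∀ i ∈ Finset.range n, sg (A k i) (A k (i+1)) =
        (g i - g (i+1)) + sg (A (k+1) i) (A (k+1) (i+1)) := by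
      intro i _
      have := cell k i
      simp only [hgdef]
      linarith
    have : W k = (∑ i ∈ Finset.range n, (g i - g (i+1))) + W (k+1) := by
      simp only [hWdef]
      rw [Finset.sum_congr rfl hcongr, Finset.sum_add_distrib]
    rw [this, Finset.sum_range_sub' g n, hgn]
    ring
  have ht0 : t 0 = z := by
    show ((ζ + ((0:ℕ):ℝ)*q : ℝ) : AddCircle (2:ℝ)) = z
    norm_num
    exact hζ
  have htm : t m = o := by
    show ((ζ + (m:ℝ)*q : ℝ) : AddCircle (2:ℝ)) = o
    have : ζ + (m:ℝ)*q = ω := by rw [hq]; field_simp; ring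
    rw [this]
    exact hω
  have hW0 : W 0 = 0 := by
    simp only [hWdef]
    refine Finset.sum_eq_zero fun i _ => ?_
    have hA0 : ∀ j : ℕ, A 0 j = z := by
      intro j
      show F (t 0, x j) = z
      rw [ht0]
      exact hz (x j)
    rw [hA0 i, hA0 (i+1)]
    exact sg_self z
  have hWm : W m = 2 := by
    simp only [hWdef]
    have hAm : ∀ j : ℕ, A m j = x j := by
      intro j
      show F (t m, x j) = x j
      rw [htm]
      exact ho (x j)
    have : ∀ i ∈ Finset.range n, sg (A m i) (A m (i+1)) = 2/n := by
      intro i _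
      rw [hAm i, hAm (i+1)]
      exact hsgx i
    rw [Finset.sum_congr rfl this, Finset.sum_const, Finset.card_range, nsmul_eq_mul]
    field_simp
  have hall : ∀ k : ℕ, W k = W 0 := by
    intro k
    induction k with
    | zero => rfl
    | succ k ih => rw [hstepW k, ih]
  have := hall m
  rw [hWm, hW0] at this
  norm_num at this
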